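/- Let F be a field of characteristic 0, n ≥ 3, and let t: A(n,α) → F be the trace functional of the trace extension A(n,α) = F((x)) ⊕ F[x]/(xⁿ) determined by a sequence α = (αᵢ)_{i≤n−2} with α_{n−1} := 1 and t(xᵏ) = 0 for k ≥ n. Then there exists a power series u = x(1 + u₁x + u₂x² + ⋯) ∈ F[[x]] such that t(uᵏ) = 0 for all integers k ∉ {0, n−1}, where negative powers uᵏ are computed in F((x)). -/

import Mathlib

open PowerSeries HahnSeries

namespace TraceExtAux

variable {F : Type*} [Field F]

/-- Integer power of a power series (inverse taken in the power-series sense). -/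
noncomputable def zp (V : PowerSeries F) (k : ℤ) : PowerSeries F :=
  if 0 ≤ k then V ^ k.toNat else (V⁻¹) ^ (-k).toNat

lemma zp_zero (V : PowerSeries F) : zp V 0 = 1 := by simp [zp]

lemma zp_add_one (V : PowerSeries F) (k : ℕ) : zp V ((k : ℤ) + 1) = zp V k * V := by
  have h1 : ((k : ℤ) + 1).toNat = k + 1 := by omega
  have h2 : ((k : ℤ)).toNat = k := by omega
  rw [zp, zp, if_pos (by omega), if_pos (by omega), h1, h2, pow_succ]

lemma zp_neg_sub_one (V : PowerSeries F) (k : ℕ) :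
    zp V (-(k : ℤ) - 1) = zp V (-(k : ℤ)) * V⁻¹ := by
  rcases Nat.eq_zero_or_pos k with h | h
  · subst h
    rw [zp, zp, if_neg (by omega), if_pos (by omega)]
    norm_num
  · rw [zp, zp, if_neg (by omega), if_neg (by omega)]
    have e1 : (-(-(k : ℤ) - 1)).toNat = k + 1 := by omega
    have e2 : (-(-(k : ℤ))).toNat = k := by omega
    rw [e1, e2, pow_succ]

lemma coeff_mul_shaped (A Y : PowerSeries F) (m : ℕ) (hm : 1 ≤ m)
    (hY0 : constantCoeff Y = 1) (hYmid : ∀ l : ℕ, 0 < l → l < m → PowerSeries.coeff l Y = 0) :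
    (∀ d : ℕ, d < m → PowerSeries.coeff d (A * Y) = PowerSeries.coeff d A) ∧
      PowerSeries.coeff m (A * Y) = PowerSeries.coeff m A + constantCoeff A * PowerSeries.coeff m Y := by
  constructor
  · intro d hd
    rw [PowerSeries.coeff_mul]
    rw [Finset.sum_eq_single_of_mem (d, 0) (by simp)]
    · rw [PowerSeries.coeff_zero_eq_constantCoeff, hY0, mul_one]
    · rintro ⟨a, b⟩ hab hne
      have hab' : a + b = d := Finset.HasAntidiagonal.mem_antidiagonal.mp hab
      have hb : 0 < b := by
        rcases Nat.eq_zero_or_pos b with hb0 | hb0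
        · exfalso; apply hne
          subst hb0
          have : a = d := by omega
          subst this; rfl
        · exact hb0
      rw [hYmid b hb (by omega), mul_zero]
  · rw [PowerSeries.coeff_mul, Finset.Nat.sum_antidiagonal_eq_sum_range_succ_mk,
      Finset.sum_range_succ]
    obtain ⟨m', rfl⟩ : ∃ m', m = m' + 1 := ⟨m - 1, by omega⟩
    rw [Finset.sum_range_succ']
    have hmid : ∀ i ∈ Finset.range m',
        PowerSeries.coeff (i + 1) A * PowerSeries.coeff (m' + 1 - (i + 1)) Y = 0 := by
      intro i hi
      rw [hYmid (m' + 1 - (i + 1)) (by simp at hi; omega) (by simp at hi; omega), mul_zero]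
    rw [Finset.sum_congr rfl hmid, Finset.sum_const_zero, zero_add, Nat.sub_zero,
      PowerSeries.coeff_zero_eq_constantCoeff_apply, Nat.sub_self,
      PowerSeries.coeff_zero_eq_constantCoeff_apply, hY0, mul_one]
    ring

lemma coeff_mul_lowzero (A B : PowerSeries F) (m : ℕ)
    (hB : ∀ b : ℕ, b < m → PowerSeries.coeff b B = 0) :
    (∀ d : ℕ, d < m → PowerSeries.coeff d (A * B) = 0) ∧
      PowerSeries.coeff m (A * B) = constantCoeff A * PowerSeries.coeff m B := by
  constructor
  · intro d hd
    rw [PowerSeries.coeff_mul]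
    apply Finset.sum_eq_zero
    rintro ⟨a, b⟩ hab
    have hab' : a + b = d := Finset.HasAntidiagonal.mem_antidiagonal.mp hab
    rw [hB b (by omega), mul_zero]
  · rw [PowerSeries.coeff_mul]
    rw [Finset.sum_eq_single_of_mem (0, m) (by simp)]
    · rw [PowerSeries.coeff_zero_eq_constantCoeff]
    · rintro ⟨a, b⟩ hab hne
      have hab' : a + b = m := Finset.HasAntidiagonal.mem_antidiagonal.mp hab
      have hb : b < m := by
        rcases Nat.lt_or_ge b m with h | h
        · exact h
        · exfalso; apply hne
          have hbm : b = m := by omega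
          subst hbm
          have : a = 0 := by omega
          subst this; rfl
      rw [hB b hb, mul_zero]

lemma shaped_zp (Y : PowerSeries F) (m : ℕ) (hm : 1 ≤ m)
    (hY0 : constantCoeff Y = 1) (hYmid : ∀ l : ℕ, 0 < l → l < m → PowerSeries.coeff l Y = 0)
    (k : ℤ) :
    constantCoeff (zp Y k) = 1 ∧ (∀ l : ℕ, 0 < l → l < m → PowerSeries.coeff l (zp Y k) = 0) ∧
      PowerSeries.coeff m (zp Y k) = (k : F) * PowerSeries.coeff m Y := by
  have hYne : constantCoeff Y ≠ 0 := by rw [hY0]; exact one_ne_zero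
  have hIY : Y⁻¹ * Y = 1 := PowerSeries.inv_mul_cancel Y hYne
  have hI0 : constantCoeff Y⁻¹ = 1 := by
    rw [PowerSeries.constantCoeff_inv, hY0, inv_one]
  have hImid : ∀ l : ℕ, 0 < l → l < m → PowerSeries.coeff l Y⁻¹ = 0 := by
    intro l h1 h2
    have h := (coeff_mul_shaped Y⁻¹ Y m hm hY0 hYmid).1 l h2
    rw [hIY, PowerSeries.coeff_one, if_neg (by omega)] at h
    exact h.symm
  have hIm : PowerSeries.coeff m Y⁻¹ = - PowerSeries.coeff m Y := by
    have h := (coeff_mul_shaped Y⁻¹ Y m hm hY0 hYmid).2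
    rw [hIY, PowerSeries.coeff_one, if_neg (by omega), hI0, one_mul] at h
    linear_combination -h
  induction k using Int.induction_on with
  | zero =>
      rw [zp_zero]
      refine ⟨map_one _, fun l h1 _ => ?_, ?_⟩
      · rw [PowerSeries.coeff_one, if_neg (by omega)]
      · rw [PowerSeries.coeff_one, if_neg (by omega)]
        norm_num
  | succ k ih =>
      obtain ⟨ih0, ihmid, ihm⟩ := ih
      have h := coeff_mul_shaped (zp Y k) Y m hm hY0 hYmid
      rw [zp_add_one]
      refine ⟨?_, fun l h1 h2 => ?_, ?_⟩
      · rw [map_mul, ih0, hY0, one_mul]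
      · rw [h.1 l h2, ihmid l h1 h2]
      · rw [h.2, ihm, ih0, one_mul]
        push_cast
        ring
  | pred k ih =>
      obtain ⟨ih0, ihmid, ihm⟩ := ih
      have h := coeff_mul_shaped (zp Y (-(k : ℤ))) Y⁻¹ m hm hI0 hImid
      rw [zp_neg_sub_one]
      refine ⟨?_, fun l h1 h2 => ?_, ?_⟩
      · rw [map_mul, ih0, hI0, one_mul]
      · rw [h.1 l h2, ihmid l h1 h2]
      · rw [h.2, ihm, ih0, one_mul, hIm]
        push_cast
        ring

lemma constantCoeff_zp (V : PowerSeries F) (hV : constantCoeff V = 1) (k : ℤ) :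
    constantCoeff (zp V k) = 1 :=
  (shaped_zp V 1 le_rfl hV (fun l h1 h2 => by omega) k).1

lemma zp_mul (A B : PowerSeries F) (k : ℤ) : zp (A * B) k = zp A k * zp B k := by
  rw [zp, zp, zp]
  split
  · rw [mul_pow]
  · rw [PowerSeries.mul_inv_rev, mul_pow, mul_comm]

lemma key (V W : PowerSeries F) (hV : constantCoeff V = 1) (hW : constantCoeff W = 1)
    (m : ℕ) (hm : 1 ≤ m) (hag : ∀ l : ℕ, l < m → PowerSeries.coeff l V = PowerSeries.coeff l W) (k : ℤ) :
    (∀ d : ℕ, d < m → PowerSeries.coeff d (zp W k) = PowerSeries.coeff d (zp V k)) ∧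
      PowerSeries.coeff m (zp W k) =
        PowerSeries.coeff m (zp V k) + (k : F) * (PowerSeries.coeff m W - PowerSeries.coeff m V) := by
  have hVne : constantCoeff V ≠ 0 := by rw [hV]; exact one_ne_zero
  set Y := V⁻¹ * W with hYdef
  have hVY : V * Y = W := by
    rw [hYdef, ← mul_assoc, PowerSeries.mul_inv_cancel V hVne, one_mul]
  have hY0 : constantCoeff Y = 1 := by
    rw [hYdef, map_mul, PowerSeries.constantCoeff_inv, hV, hW, inv_one, one_mul]
  have hsub : Y - 1 = V⁻¹ * (W - V) := by
    rw [mul_sub, ← hYdef, PowerSeries.inv_mul_cancel V hVne]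
  have hlowWV : ∀ b : ℕ, b < m → PowerSeries.coeff b (W - V) = 0 := by
    intro b hb
    rw [map_sub, hag b hb, sub_self]
  have hmid : ∀ l : ℕ, 0 < l → l < m → PowerSeries.coeff l Y = 0 := by
    intro l h1 h2
    have h3 : PowerSeries.coeff l (Y - 1) = PowerSeries.coeff l Y := by
      rw [map_sub, PowerSeries.coeff_one, if_neg (by omega), sub_zero]
    rw [← h3, hsub]
    exact (coeff_mul_lowzero V⁻¹ (W - V) m hlowWV).1 l h2
  have hYm : PowerSeries.coeff m Y = PowerSeries.coeff m W - PowerSeries.coeff m V := by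
    have h3 : PowerSeries.coeff m (Y - 1) = PowerSeries.coeff m Y := by
      rw [map_sub, PowerSeries.coeff_one, if_neg (by omega), sub_zero]
    rw [← h3, hsub, (coeff_mul_lowzero V⁻¹ (W - V) m hlowWV).2,
      PowerSeries.constantCoeff_inv, hV, inv_one, one_mul, map_sub]
  have hzpW : zp W k = zp V k * zp Y k := by rw [← hVY, zp_mul]
  have hsh := shaped_zp Y m hm hY0 hmid k
  have hms := coeff_mul_shaped (zp V k) (zp Y k) m hm hsh.1 hsh.2.1
  constructor
  · intro d hd
    rw [hzpW, hms.1 d hd]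
  · rw [hzpW, hms.2, hsh.2.2, hYm, constantCoeff_zp V hV, one_mul]

/-- The residue-type functional on integer powers. -/
noncomputable def Rfun (α : ℤ → F) (n : ℕ) (V : PowerSeries F) (k : ℤ) : F :=
  ∑ d ∈ Finset.range (((n : ℤ) - 1 - k).toNat + 1), α (k + d) * PowerSeries.coeff d (zp V k)

/-- The recursively constructed coefficients of the normalizing series. -/
noncomputable def cseq (α : ℤ → F) (n : ℕ) : ℕ → F
  | 0 => 1
  | (m + 1) =>
    if m + 1 = n - 1 then 0
    else
      - Rfun α n (PowerSeries.mk fun l => if h : l < m + 1 then cseq α n l else 0)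
          ((n : ℤ) - 1 - (m + 1 : ℕ)) / ((((n : ℤ) - 1 - (m + 1 : ℕ)) : ℤ) : F)
  termination_by m => m
  decreasing_by exact h

lemma cseq_spec (α : ℤ → F) (n : ℕ) (m : ℕ) (hm : 1 ≤ m) (hmn : m ≠ n - 1) :
    cseq α n m =
      - Rfun α n (PowerSeries.mk fun l => if h : l < m then cseq α n l else 0)
          ((n : ℤ) - 1 - (m : ℕ)) / ((((n : ℤ) - 1 - (m : ℕ)) : ℤ) : F) := by
  obtain ⟨m', rfl⟩ : ∃ m', m = m' + 1 := ⟨m - 1, by omega⟩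
  rw [cseq, if_neg hmn]

end TraceExtAux

open TraceExtAux PowerSeries HahnSeries in
/-- Let `F` be a field of characteristic `0`, `n ≥ 3`, and let
`t : A(n,α) → F` be the trace functional of the trace extension `A(n,α)` determined by a
sequence `α : ℤ → F` with `α_{n-1} = 1` and `α_k = 0` for `k ≥ n`; on the Laurent-series
component `t(f) = Σᵢ αᵢ fᵢ`.  Then there is a power series
`u = x(1 + u₁x + u₂x² + ⋯) ∈ F[[x]]` such that `t(uᵏ) = 0` for all integers
`k ∉ {0, n-1}`, where negative powers are computed in `F((x))`. -/
theorem trace_extension_normalizing_series_exists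
    (F : Type*) [Field F] [CharZero F]
    (n : ℕ) (hn : 3 ≤ n) (α : ℤ → F)
    (hnorm : α ((n : ℤ) - 1) = 1)
    (htop : ∀ k : ℤ, (n : ℤ) ≤ k → α k = 0) :
    ∃ u : LaurentSeries F,
      u.coeff 1 = 1 ∧
      (∀ i : ℤ, i ≤ 0 → u.coeff i = 0) ∧
      (∀ k : ℤ, k ≠ 0 → k ≠ (n : ℤ) - 1 →
        ∑ᶠ i : ℤ, α i * (u ^ k).coeff i = 0) := by
  classical
  set c : ℕ → F := cseq α n with hc
  set V : PowerSeries F := PowerSeries.mk c with hVdef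
  have hc0 : c 0 = 1 := by rw [hc, cseq]
  have hVconst : constantCoeff V = 1 := by
    rw [hVdef, PowerSeries.constantCoeff_mk]; exact hc0
  have hVne : constantCoeff V ≠ 0 := by rw [hVconst]; exact one_ne_zero
  set u : LaurentSeries F :=
    HahnSeries.single (1 : ℤ) (1 : F) * HahnSeries.ofPowerSeries ℤ F V with hu
  -- coefficient of `single a 1 * x`
  have hsing : ∀ (a i : ℤ) (x : LaurentSeries F),
      (HahnSeries.single a (1 : F) * x).coeff i = x.coeff (i - a) := by
    intro a i x
    have h := HahnSeries.coeff_single_mul_add (r := (1 : F)) (x := x) (a := i - a) (b := a)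
    have h2 : i - a + a = i := by ring
    rw [h2] at h
    rw [h, one_mul]
  -- coefficients of an embedded power series
  have hofc : ∀ (φ : PowerSeries F) (i : ℤ),
      (HahnSeries.ofPowerSeries ℤ F φ).coeff i =
        if i < 0 then 0 else PowerSeries.coeff i.toNat φ := by
    intro φ i
    rw [show (HahnSeries.ofPowerSeries ℤ F) φ = ((φ : PowerSeries F) : LaurentSeries F) from rfl,
      PowerSeries.coeff_coe]
    rcases lt_or_ge i 0 with h | h
    · rw [if_pos h, if_pos h]
    · rw [if_neg (by omega), if_neg (by omega)]
      have e : i.natAbs = i.toNat := by omega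
      rw [e]
  have hXX : HahnSeries.single (1 : ℤ) (1 : F) * HahnSeries.single (-1 : ℤ) (1 : F) = 1 := by
    rw [HahnSeries.single_mul_single]
    norm_num
  have hVV : V * V⁻¹ = 1 := PowerSeries.mul_inv_cancel V hVne
  have huinv : u⁻¹ = HahnSeries.single (-1 : ℤ) (1 : F) * HahnSeries.ofPowerSeries ℤ F V⁻¹ := by
    apply inv_eq_of_mul_eq_one_right
    rw [hu, mul_mul_mul_comm, hXX, ← map_mul, hVV, map_one, one_mul]
  have hucoeff1 : u.coeff 1 = 1 := by
    rw [hu, hsing, sub_self, hofc, if_neg (by omega)]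
    rw [Int.toNat_zero, hVdef, PowerSeries.coeff_mk]
    exact hc0
  have hune : u ≠ 0 := by
    intro h
    rw [h, HahnSeries.coeff_zero] at hucoeff1
    exact one_ne_zero hucoeff1.symm
  have hupow : ∀ k : ℤ,
      u ^ k = HahnSeries.single k (1 : F) * HahnSeries.ofPowerSeries ℤ F (zp V k) := by
    intro k
    induction k using Int.induction_on with
    | zero =>
        rw [zpow_zero, zp_zero, (HahnSeries.ofPowerSeries ℤ F).map_one, mul_one]
        exact HahnSeries.single_zero_one.symm
    | succ k ih =>
        rw [zpow_add_one₀ hune, ih, hu, zp_add_one, map_mul, mul_mul_mul_comm,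
          HahnSeries.single_mul_single, mul_one]
    | pred k ih =>
        rw [show (-(k : ℤ) - 1) = (-(k : ℤ)) - 1 from rfl, zpow_sub_one₀ hune, ih, huinv,
          zp_neg_sub_one, map_mul, mul_mul_mul_comm, HahnSeries.single_mul_single, mul_one,
          show (-(k : ℤ) + -1) = -(k : ℤ) - 1 by ring]
  have hukcoeff : ∀ (k i : ℤ), (u ^ k).coeff i =
      if i - k < 0 then 0 else PowerSeries.coeff (i - k).toNat (zp V k) := by
    intro k i
    rw [hupow k, hsing, hofc]
  refine ⟨u, hucoeff1, ?_, ?_⟩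
  · intro i hi
    rw [hu, hsing, hofc, if_pos (by omega)]
  · intro k hk0 hk1
    by_cases hcase : (n : ℤ) - 1 < k
    · -- all terms vanish
      have hzero : ∀ i : ℤ, α i * (u ^ k).coeff i = 0 := by
        intro i
        rcases lt_or_ge i k with h | h
        · rw [hukcoeff, if_pos (by omega), mul_zero]
        · rw [htop i (by omega), zero_mul]
      rw [finsum_congr hzero, finsum_zero]
    · set m : ℕ := ((n : ℤ) - 1 - k).toNat with hmdef
      have hmk : (m : ℤ) = (n : ℤ) - 1 - k := by omega
      have hm1 : 1 ≤ m := by omega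
      have hsupp : (Function.support fun i => α i * (u ^ k).coeff i) ⊆
          ↑(Finset.Icc k ((n : ℤ) - 1)) := by
        intro i hi
        simp only [Function.mem_support] at hi
        simp only [Finset.coe_Icc, Set.mem_Icc]
        constructor
        · by_contra h
          exact hi (by rw [hukcoeff, if_pos (by omega), mul_zero])
        · by_contra h
          exact hi (by rw [htop i (by omega), zero_mul])
      rw [finsum_eq_sum_of_support_subset _ hsupp]
      have hIcc : Finset.Icc k ((n : ℤ) - 1) =
          Finset.map ⟨fun d : ℕ => k + d, show Function.Injective (fun d : ℕ => k + (d : ℤ)) from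
            fun a b hab => by simpa using hab⟩
            (Finset.range (m + 1)) := by
        ext i
        simp only [Finset.mem_Icc, Finset.mem_map, Finset.mem_range,
          Function.Embedding.coeFn_mk]
        constructor
        · intro h
          exact ⟨(i - k).toNat, by omega, by omega⟩
        · rintro ⟨d, hd, rfl⟩
          omega
      rw [hIcc, Finset.sum_map]
      simp only [Function.Embedding.coeFn_mk]
      have hsummand : ∀ d ∈ Finset.range (m + 1),
          α (k + (d : ℤ)) * (u ^ k).coeff (k + d) =
            α (k + (d : ℤ)) * PowerSeries.coeff d (zp V k) := by
        intro d _
        rw [hukcoeff, if_neg (by omega)]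
        have e : (k + (d : ℤ) - k).toNat = d := by omega
        rw [e]
      rw [Finset.sum_congr rfl hsummand]
      -- the sum is `Rfun α n V k`; show it vanishes using the recursion
      have hRgoal : ∑ d ∈ Finset.range (m + 1), α (k + (d : ℤ)) * PowerSeries.coeff d (zp V k) =
          Rfun α n V k := by
        rw [Rfun, ← hmdef]
      rw [hRgoal]
      -- truncation
      set T : PowerSeries F := PowerSeries.mk (fun l => if h : l < m then c l else 0) with hTdef
      have hTconst : constantCoeff T = 1 := by
        rw [hTdef, PowerSeries.constantCoeff_mk, dif_pos (by omega)]
        exact hc0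
      have hag : ∀ l : ℕ, l < m → PowerSeries.coeff l T = PowerSeries.coeff l V := by
        intro l hl
        rw [hTdef, hVdef, PowerSeries.coeff_mk, PowerSeries.coeff_mk, dif_pos hl]
      have hcoeffmV : PowerSeries.coeff m V = c m := by rw [hVdef, PowerSeries.coeff_mk]
      have hcoeffmT : PowerSeries.coeff m T = 0 := by
        rw [hTdef, PowerSeries.coeff_mk, dif_neg (lt_irrefl m)]
      have hkey := key T V hTconst hVconst m hm1 hag k
      have hmn : m ≠ n - 1 := by omega
      have hkexpr : (n : ℤ) - 1 - (m : ℕ) = k := by omega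
      have hceq : c m = - Rfun α n T k / ((k : ℤ) : F) := by
        rw [hc]
        rw [cseq_spec α n m hm1 hmn, hkexpr, ← hc, ← hTdef]
      have hdiff : Rfun α n V k = Rfun α n T k + (k : F) * c m := by
        rw [Rfun, Rfun, ← hmdef, Finset.sum_range_succ, Finset.sum_range_succ]
        have hlow : ∀ d ∈ Finset.range m,
            α (k + (d : ℤ)) * PowerSeries.coeff d (zp V k) =
              α (k + (d : ℤ)) * PowerSeries.coeff d (zp T k) := by
          intro d hd
          rw [hkey.1 d (Finset.mem_range.mp hd)]
        rw [Finset.sum_congr rfl hlow, hkey.2, hcoeffmV, hcoeffmT]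
        have halpha : α (k + (m : ℤ)) = 1 := by
          rw [show k + (m : ℤ) = (n : ℤ) - 1 by omega]
          exact hnorm
        rw [halpha]
        ring
      have hkF : ((k : ℤ) : F) ≠ 0 := Int.cast_ne_zero.mpr hk0
      rw [hdiff, hceq]
      field_simp
      ring
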